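/- Let β > 1. If ω and ω' are full admissible words (of lengths n and m), then their concatenation ω * ω' is a full admissible word of length n + m. Moreover, for every ℓ ≥ 1 the all-zeros word 0^ℓ is full, and if ω is full then ω * 0^ℓ is full. -/
import Mathlib


open Filter MeasureTheory Set

noncomputable def betaT (β : ℝ) (x : ℝ) : ℝ := β * x - ⌊β * x⌋

noncomputable def eps (β x : ℝ) (n : ℕ) : ℤ := ⌊β * (betaT β)^[n - 1] x⌋

noncomputable def runLen (β x : ℝ) (n : ℕ) : ℕ :=
  sSup {j | ∃ i, i + j ≤ n ∧ ∀ k < j, eps β x (i + k + 1) = 0}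

def isAdmissible (β : ℝ) (n : ℕ) (ω : ℕ → ℤ) : Prop :=
  ∃ x ∈ Set.Ico (0 : ℝ) 1, ∀ k < n, eps β x (k + 1) = ω k

def cylinder (β : ℝ) (n : ℕ) (ω : ℕ → ℤ) : Set ℝ :=
  {x | x ∈ Set.Ico (0 : ℝ) 1 ∧ ∀ k < n, eps β x (k + 1) = ω k}

def isFull (β : ℝ) (n : ℕ) (ω : ℕ → ℤ) : Prop :=
  MeasureTheory.volume (cylinder β n ω) = ENNReal.ofReal (β ^ (-(n : ℤ)))

open Classical in
noncomputable def epsStar (β : ℝ) : ℕ → ℤ :=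
  if h : ∃ m, 1 ≤ m ∧ eps β 1 m ≠ 0 ∧ ∀ k, m < k → eps β 1 k = 0 then
    fun n =>
      if (n - 1) % Nat.find h + 1 = Nat.find h then eps β 1 (Nat.find h) - 1
      else eps β 1 ((n - 1) % Nat.find h + 1)
  else eps β 1

def lexLt (u v : ℕ → ℤ) : Prop := ∃ j, (∀ k < j, u k = v k) ∧ u j < v j

def lexLe (u v : ℕ → ℤ) : Prop := lexLt u v ∨ u = v

noncomputable def vbeta (β x : ℝ) : ℝ :=
  sSup {v | 0 ≤ v ∧ ∃ᶠ n : ℕ in atTop, (betaT β)^[n] x ≤ β ^ (-((n : ℝ) * v))}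

noncomputable def hatv (β x : ℝ) : ℝ :=
  sSup {v | 0 ≤ v ∧ ∀ᶠ N : ℕ in atTop, ∃ n, 1 ≤ n ∧ n ≤ N ∧ (betaT β)^[n] x ≤ β ^ (-(v * (N : ℝ)))}


lemma betaT_eq_fract (β y : ℝ) : betaT β y = Int.fract (β * y) := rfl

lemma betaT_mem (β y : ℝ) : betaT β y ∈ Set.Ico (0:ℝ) 1 :=
  ⟨Int.fract_nonneg _, Int.fract_lt_one _⟩

lemma iterate_mem {β x : ℝ} (hx : x ∈ Set.Ico (0:ℝ) 1) (n : ℕ) :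
    (betaT β)^[n] x ∈ Set.Ico (0:ℝ) 1 := by
  cases n with
  | zero => exact hx
  | succ n => rw [Function.iterate_succ_apply']; exact betaT_mem _ _

lemma eps_shift (β x : ℝ) (n k : ℕ) :
    eps β x (n + k + 1) = eps β ((betaT β)^[n] x) (k + 1) := by
  simp [eps, add_comm n k, Function.iterate_add_apply]

noncomputable def pval (β x : ℝ) (n : ℕ) : ℝ :=
  ∑ k ∈ Finset.range n, (eps β x (k+1) : ℝ) * (β ^ (k+1))⁻¹

lemma iter_formula {β : ℝ} (hβ : 1 < β) (x : ℝ) (n : ℕ) :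
    (betaT β)^[n] x = β ^ n * (x - pval β x n) := by
  have hβ0 : (0:ℝ) < β := lt_trans one_pos hβ
  induction n with
  | zero => simp [pval]
  | succ n ih =>
    rw [Function.iterate_succ_apply', betaT]
    have he : ⌊β * (betaT β)^[n] x⌋ = eps β x (n+1) := by simp [eps]
    rw [he, ih,
      show pval β x (n+1) = pval β x n + (eps β x (n+1):ℝ) * (β^(n+1))⁻¹ from
        Finset.sum_range_succ _ _]
    have h1 : (β:ℝ) ^ (n+1) ≠ 0 := by positivity
    field_simp
    ring

noncomputable def aval (β : ℝ) (n : ℕ) (ω : ℕ → ℤ) : ℝ :=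
  ∑ k ∈ Finset.range n, (ω k : ℝ) * (β ^ (k+1))⁻¹

lemma pval_eq_aval {β x : ℝ} {n : ℕ} {ω : ℕ → ℤ} (h : ∀ k < n, eps β x (k+1) = ω k) :
    pval β x n = aval β n ω := by
  unfold pval aval
  exact Finset.sum_congr rfl fun k hk => by rw [h k (Finset.mem_range.mp hk)]

lemma cylinder_subset {β : ℝ} (hβ : 1 < β) (n : ℕ) (ω : ℕ → ℤ) :
    cylinder β n ω ⊆ Set.Ico (aval β n ω) (aval β n ω + (β ^ n)⁻¹) := by
  intro x hx
  have hβn : (0:ℝ) < β ^ n := by positivity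
  have hit := iterate_mem hx.1 (β := β) n
  rw [iter_formula hβ, pval_eq_aval hx.2] at hit
  constructor
  · nlinarith [hit.1]
  · nlinarith [hit.2, mul_inv_cancel₀ (ne_of_gt hβn)]

lemma measurable_betaT (β : ℝ) : Measurable (betaT β) := by
  have h : Measurable fun x : ℝ => β * x := measurable_const.mul measurable_id
  have : betaT β = fun x => Int.fract (β * x) := rfl
  rw [this]
  exact measurable_fract.comp h

lemma measurable_eps (β : ℝ) (m : ℕ) : Measurable fun x => eps β x m := by
  unfold eps
  exact ((measurable_const.mul ((measurable_betaT β).iterate (m-1))).floor)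

lemma measurableSet_cylinder (β : ℝ) (n : ℕ) (ω : ℕ → ℤ) :
    MeasurableSet (cylinder β n ω) := by
  have : _root_.cylinder β n ω =
      Set.Ico (0:ℝ) 1 ∩ ⋂ k ∈ Finset.range n, {x | eps β x (k+1) = ω k} := by
    ext x
    simp [_root_.cylinder, Set.mem_Ico]
  rw [this]
  exact measurableSet_Ico.inter (MeasurableSet.biInter (Set.to_countable _)
    fun k _ => (measurable_eps β (k+1)) (measurableSet_singleton (ω k)))

lemma zero_iter {β x : ℝ} (hβ : 1 < β) (hx0 : 0 ≤ x) :
    ∀ k, β ^ k * x < 1 → (betaT β)^[k] x = β ^ k * x := by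
  intro k
  induction k with
  | zero => simp
  | succ k ih =>
    intro hk
    have hβ0 : (0:ℝ) < β := lt_trans one_pos hβ
    have hle : β ^ k ≤ β ^ (k+1) := pow_le_pow_right₀ (le_of_lt hβ) (Nat.le_succ k)
    have hk' : β ^ k * x < 1 := lt_of_le_of_lt (mul_le_mul_of_nonneg_right hle hx0) hk
    rw [Function.iterate_succ_apply', ih hk', betaT]
    have hfl : ⌊β * (β ^ k * x)⌋ = 0 := by
      rw [Int.floor_eq_zero_iff]
      constructor
      · positivity
      · calc β * (β ^ k * x) = β ^ (k+1) * x := by ring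
          _ < 1 := hk
    rw [hfl]
    push_cast
    ring

lemma cylinder_zero {β : ℝ} (hβ : 1 < β) (ℓ : ℕ) :
    cylinder β ℓ (fun _ => 0) = Set.Ico (0:ℝ) ((β ^ ℓ)⁻¹) := by
  have hβ0 : (0:ℝ) < β := lt_trans one_pos hβ
  have hβℓ : (0:ℝ) < β ^ ℓ := by positivity
  apply Set.Subset.antisymm
  · intro x hx
    have := cylinder_subset hβ ℓ (fun _ => 0) hx
    have ha : aval β ℓ (fun _ => 0) = 0 := by simp [aval]
    rw [ha] at this
    simpa using this
  · intro x hx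
    have hx0 : (0:ℝ) ≤ x := hx.1
    have hinv : (β ^ ℓ)⁻¹ ≤ 1 := by
      rw [inv_le_one_iff₀]; right; exact one_le_pow₀ (le_of_lt hβ)
    refine ⟨⟨hx0, lt_of_lt_of_le hx.2 hinv⟩, fun k hk => ?_⟩
    have hk1 : β ^ (k+1) * x < 1 := by
      have h1 : β ^ ℓ * x < 1 := by
        calc β ^ ℓ * x < β ^ ℓ * (β ^ ℓ)⁻¹ := mul_lt_mul_of_pos_left hx.2 hβℓ
          _ = 1 := mul_inv_cancel₀ (ne_of_gt hβℓ)
      have hle : β ^ (k+1) ≤ β ^ ℓ := pow_le_pow_right₀ (le_of_lt hβ) hk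
      exact lt_of_le_of_lt (mul_le_mul_of_nonneg_right hle hx0) h1
    have hk0 : β ^ k * x < 1 := by
      have hle : β ^ k ≤ β ^ (k+1) := pow_le_pow_right₀ (le_of_lt hβ) (Nat.le_succ k)
      exact lt_of_le_of_lt (mul_le_mul_of_nonneg_right hle hx0) hk1
    show eps β x (k+1) = 0
    unfold eps
    simp only [Nat.add_sub_cancel]
    rw [zero_iter hβ hx0 k hk0, Int.floor_eq_zero_iff]
    constructor
    · positivity
    · calc β * (β ^ k * x) = β ^ (k+1) * x := by ring
        _ < 1 := hk1

set_option maxHeartbeats 2000000 in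
lemma concat_full {β : ℝ} (hβ : 1 < β) (n m : ℕ) (ω ω' : ℕ → ℤ)
    (hωf : volume (cylinder β n ω) = ENNReal.ofReal ((β^n)⁻¹))
    (hω'f : volume (cylinder β m ω') = ENNReal.ofReal ((β^m)⁻¹)) :
    volume (cylinder β (n+m) (fun k => if k < n then ω k else ω' (k-n)))
      = ENNReal.ofReal ((β^(n+m))⁻¹) := by
  have hβ0 : (0:ℝ) < β := lt_trans one_pos hβ
  have hβn : (0:ℝ) < β ^ n := by positivity
  set a := aval β n ω with ha
  set A := cylinder β n ω with hA
  set C := cylinder β m ω' with hC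
  set g : ℝ → ℝ := fun x => β ^ n * (x - a) with hg
  -- Step 1 : set identity
  have hset : cylinder β (n+m) (fun k => if k < n then ω k else ω' (k-n))
      = A ∩ g ⁻¹' C := by
    ext x
    constructor
    · rintro ⟨hx1, hx2⟩
      have hxA : x ∈ A := by
        refine ⟨hx1, fun k hk => ?_⟩
        have := hx2 k (lt_of_lt_of_le hk (Nat.le_add_right n m))
        simpa [hk] using this
      refine ⟨hxA, ?_⟩
      have hTn : (betaT β)^[n] x = g x := by
        rw [iter_formula hβ, pval_eq_aval hxA.2]
      refine ⟨by rw [← hTn]; exact iterate_mem hx1 n, fun j hj => ?_⟩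
      rw [← hTn, ← eps_shift]
      have := hx2 (n + j) (by omega)
      simpa [Nat.not_lt.mpr (Nat.le_add_right n j), Nat.add_sub_cancel_left] using this
    · rintro ⟨hxA, hxC⟩
      have hTn : (betaT β)^[n] x = g x := by
        rw [iter_formula hβ, pval_eq_aval hxA.2]
      refine ⟨hxA.1, fun k hk => ?_⟩
      by_cases hkn : k < n
      · simpa [hkn] using hxA.2 k hkn
      · push_neg at hkn
        obtain ⟨j, rfl⟩ : ∃ j, k = n + j := ⟨k - n, by omega⟩
        have := hxC.2 j (by omega)
        rw [← hTn, ← eps_shift] at this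
        simpa [Nat.not_lt.mpr (Nat.le_add_right n j), Nat.add_sub_cancel_left] using this
  rw [hset]
  -- Step 2 : volume
  set I := Set.Ico a (a + (β ^ n)⁻¹) with hI
  have hAI : A ⊆ I := cylinder_subset hβ n ω
  have hvolI : volume I = ENNReal.ofReal ((β ^ n)⁻¹) := by
    rw [hI, Real.volume_Ico, add_sub_cancel_left]
  have hIA0 : volume (I \ A) = 0 := by
    rw [measure_diff hAI (measurableSet_cylinder β n ω).nullMeasurableSet
      (by rw [hωf]; exact ENNReal.ofReal_ne_top), hvolI, hωf, tsub_self]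
  have hBI : g ⁻¹' C ⊆ I := by
    intro x hx
    have h01 := (hx : g x ∈ C).1
    simp only [hg, Set.mem_Ico] at h01 ⊢
    constructor
    · nlinarith [h01.1]
    · nlinarith [h01.2, mul_inv_cancel₀ (ne_of_gt hβn)]
  have hABB : volume (A ∩ g ⁻¹' C) = volume (g ⁻¹' C) := by
    apply le_antisymm (measure_mono Set.inter_subset_right)
    calc volume (g ⁻¹' C) ≤ volume ((A ∩ g ⁻¹' C) ∪ (I \ A)) := by
          apply measure_mono
          intro x hx
          by_cases hxA : x ∈ A
          · exact Or.inl ⟨hxA, hx⟩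
          · exact Or.inr ⟨hBI hx, hxA⟩
      _ ≤ volume (A ∩ g ⁻¹' C) + volume (I \ A) := measure_union_le _ _
      _ = volume (A ∩ g ⁻¹' C) := by rw [hIA0, add_zero]
  rw [hABB]
  -- affine preimage
  have hpre : g ⁻¹' C = (fun x => β ^ n * x) ⁻¹' ((fun y => (-(β ^ n * a)) + y) ⁻¹' C) := by
    ext x
    simp only [Set.mem_preimage, hg]
    have heq : -(β ^ n * a) + β ^ n * x = β ^ n * (x - a) := by ring
    rw [heq]
  rw [hpre, Real.volume_preimage_mul_left (ne_of_gt hβn), measure_preimage_add,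
    hω'f, abs_of_pos (by positivity), ← ENNReal.ofReal_mul (by positivity),
    ← mul_inv, ← pow_add]

theorem stmt15 (β : ℝ) (hβ : 1 < β) :
    (∀ (n m : ℕ) (ω ω' : ℕ → ℤ), isAdmissible β n ω → isFull β n ω →
      isAdmissible β m ω' → isFull β m ω' →
      isAdmissible β (n + m) (fun k => if k < n then ω k else ω' (k - n)) ∧
        isFull β (n + m) (fun k => if k < n then ω k else ω' (k - n))) ∧
    (∀ ℓ : ℕ, 1 ≤ ℓ → isFull β ℓ (fun _ => 0)) ∧
    (∀ (n ℓ : ℕ) (ω : ℕ → ℤ), 1 ≤ ℓ → isAdmissible β n ω → isFull β n ω →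
      isFull β (n + ℓ) (fun k => if k < n then ω k else 0)) := by
  have hβ0 : (0:ℝ) < β := lt_trans one_pos hβ
  have hzp : ∀ j : ℕ, β ^ (-(j:ℤ)) = ((β : ℝ) ^ j)⁻¹ := fun j => by
    rw [zpow_neg, zpow_natCast]
  have key : ∀ (n m : ℕ) (ω ω' : ℕ → ℤ), isFull β n ω → isFull β m ω' →
      isFull β (n+m) (fun k => if k < n then ω k else ω' (k-n)) := by
    intro n m ω ω' h1 h2
    unfold isFull at *
    rw [hzp] at h1 h2 ⊢
    exact concat_full hβ n m ω ω' h1 h2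
  have hzero : ∀ ℓ : ℕ, isFull β ℓ (fun _ => 0) := by
    intro ℓ
    unfold isFull
    rw [hzp, cylinder_zero hβ, Real.volume_Ico, sub_zero]
  refine ⟨?_, fun ℓ _ => hzero ℓ, ?_⟩
  · intro n m ω ω' _ h1 _ h2
    have hfull := key n m ω ω' h1 h2
    refine ⟨?_, hfull⟩
    have hne : volume (cylinder β (n+m) (fun k => if k < n then ω k else ω' (k-n))) ≠ 0 := by
      rw [show volume (cylinder β (n+m) (fun k => if k < n then ω k else ω' (k-n)))
        = ENNReal.ofReal (β ^ (-((n+m : ℕ) : ℤ))) from hfull]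
      exact (ENNReal.ofReal_pos.mpr (by positivity)).ne'
    obtain ⟨x, hx⟩ := nonempty_of_measure_ne_zero hne
    exact ⟨x, hx.1, hx.2⟩
  · intro n ℓ ω hℓ _ hfull
    exact key n ℓ ω (fun _ => 0) hfull (hzero ℓ)
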